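/- Consider minimizing f(β) = (1/2) βᵀ(X̂ᵀX̂ + ξ D²)β + (ρ d − X̂ᵀ x̂)ᵀβ over the unit simplex in ℝⁿ, where D = diag(d) with d = (d⁽¹⁾,…,d⁽ⁿ⁾), d⁽ʲ⁾ > d⁽¹⁾ > 0 for all j ≥ 2, ξ > 0, and X̂ has columns x̂⁽¹⁾,…,x̂⁽ⁿ⁾. If ρ > max over j ∈ {2,…,n} of [ (x̂⁽¹⁾ − x̂⁽ʲ⁾)ᵀ(x̂⁽¹⁾ − x̂) + ξ (d⁽¹⁾)² ] / (d⁽ʲ⁾ − d⁽¹⁾), then e₁ is the unique minimizer. -/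
import Mathlib


open Matrix

/-- The WSSR quadratic objective f(β) = ½βᵀ(X̂ᵀX̂ + ξD²)β + (ρd − X̂ᵀx̂)ᵀβ,
where X̂ has columns x̂⁽ʲ⁾ and D = diag d. -/
noncomputable def wssrObj (P n : ℕ) (xhat : Fin n → Fin P → ℝ) (x : Fin P → ℝ)
    (d : Fin n → ℝ) (ξ ρ : ℝ) (β : Fin n → ℝ) : ℝ :=
  let X : Matrix (Fin P) (Fin n) ℝ := Matrix.of fun p j => xhat j p
  (1/2) * (β ⬝ᵥ (Xᵀ * X + ξ • (Matrix.diagonal d)^2).mulVec β)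
    + (ρ • d - Xᵀ.mulVec x) ⬝ᵥ β

/-- Sufficient condition for e₁ being the unique minimizer of the WSSR problem
over the unit simplex. -/
theorem stmt6 (P n : ℕ) (hn : 0 < n)
    (xhat : Fin n → Fin P → ℝ) (x : Fin P → ℝ) (d : Fin n → ℝ)
    (ξ ρ : ℝ) (hξ : 0 < ξ)
    (i0 : Fin n) (hi0 : i0 = ⟨0, hn⟩)
    (hd1 : 0 < d i0) (hd : ∀ j, j ≠ i0 → d i0 < d j)
    (hρ : ∀ j, j ≠ i0 →
      ρ > ((xhat i0 - xhat j) ⬝ᵥ (xhat i0 - x) + ξ * (d i0)^2) / (d j - d i0)) :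
    ∀ β ∈ stdSimplex ℝ (Fin n), β ≠ Pi.single i0 1 →
      wssrObj P n xhat x d ξ ρ (Pi.single i0 1) < wssrObj P n xhat x d ξ ρ β := by
  classical
  intro β hβ hβne
  obtain ⟨hβ0, hβ1⟩ := hβ
  set X : Matrix (Fin P) (Fin n) ℝ := Matrix.of fun p j => xhat j p with hXdef
  set Q : Matrix (Fin n) (Fin n) ℝ := Xᵀ * X + ξ • (Matrix.diagonal d)^2 with hQdef
  set c : Fin n → ℝ := ρ • d - Xᵀ.mulVec x with hcdef
  set e : Fin n → ℝ := (Pi.single i0 1 : Fin n → ℝ) with hedef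
  have hfe : ∀ γ : Fin n → ℝ,
      wssrObj P n xhat x d ξ ρ γ = (1/2) * (γ ⬝ᵥ Q.mulVec γ) + c ⬝ᵥ γ := fun γ => rfl
  set v : Fin n → ℝ := β - e with hvdef
  have hβv : β = e + v := by simp [hvdef]
  have hvne : v ≠ 0 := by
    intro h
    exact hβne (by rw [hβv, h, add_zero])
  have hQsymm : Qᵀ = Q := by
    rw [hQdef]
    rw [Matrix.transpose_add, Matrix.transpose_mul, Matrix.transpose_transpose,
      Matrix.transpose_smul]
    congr 1
    rw [sq, Matrix.transpose_mul, Matrix.diagonal_transpose, ← sq]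
  have hsym : e ⬝ᵥ Q.mulVec v = (Q.mulVec e) ⬝ᵥ v := by
    rw [Matrix.dotProduct_mulVec, ← Matrix.mulVec_transpose, hQsymm]
  have expand : wssrObj P n xhat x d ξ ρ β - wssrObj P n xhat x d ξ ρ e
      = (1/2) * (v ⬝ᵥ Q.mulVec v) + (Q.mulVec e + c) ⬝ᵥ v := by
    rw [hfe, hfe, hβv]
    rw [Matrix.mulVec_add, add_dotProduct, dotProduct_add,
      dotProduct_add, add_dotProduct, dotProduct_add]
    rw [hsym, dotProduct_comm v (Q.mulVec e)]
    ring
  -- quadratic term positive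
  have hdpos : ∀ j, 0 < d j := by
    intro j
    by_cases hj : j = i0
    · rw [hj]; exact hd1
    · exact lt_trans hd1 (hd j hj)
  have hquad : 0 < v ⬝ᵥ Q.mulVec v := by
    have h1 : v ⬝ᵥ (Xᵀ * X).mulVec v = (X.mulVec v) ⬝ᵥ (X.mulVec v) := by
      rw [← Matrix.mulVec_mulVec, Matrix.dotProduct_mulVec, Matrix.vecMul_transpose]
    have h2 : v ⬝ᵥ (ξ • (Matrix.diagonal d)^2).mulVec v
        = ξ * ∑ j, (d j)^2 * (v j)^2 := by
      rw [sq, Matrix.diagonal_mul_diagonal, Matrix.smul_mulVec,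
        dotProduct_smul, smul_eq_mul]
      congr 1
      simp [dotProduct, Matrix.mulVec_diagonal]
      congr 1; funext j; ring
    rw [hQdef, Matrix.add_mulVec, dotProduct_add, h1, h2]
    have hpos2 : 0 < ∑ j, (d j)^2 * (v j)^2 := by
      obtain ⟨j0, hj0⟩ : ∃ j, v j ≠ 0 := by
        by_contra h
        push_neg at h
        exact hvne (funext h)
      apply Finset.sum_pos' (fun j _ => by positivity)
      refine ⟨j0, Finset.mem_univ j0, mul_pos (pow_pos (hdpos j0) 2) ?_⟩
      exact lt_of_le_of_ne (sq_nonneg _) (Ne.symm (pow_ne_zero 2 hj0))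
    have hnn : 0 ≤ (X.mulVec v) ⬝ᵥ (X.mulVec v) := by
      rw [dotProduct]
      exact Finset.sum_nonneg fun i _ => mul_self_nonneg _
    nlinarith
  -- linear term nonneg
  set g : Fin n → ℝ := Q.mulVec e + c with hgdef
  have hg : ∀ j, g j = xhat j ⬝ᵥ xhat i0 + (if j = i0 then ξ * (d i0)^2 else 0)
      + (ρ * d j - xhat j ⬝ᵥ x) := by
    intro j
    rw [hgdef, hQdef, hcdef, hedef]
    simp [hXdef, Matrix.add_mulVec, Matrix.mulVec_single, Matrix.mul_apply,
      Matrix.smul_mulVec, sq, Matrix.diagonal_mul_diagonal,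
      Matrix.mulVec_diagonal, Matrix.mulVec, dotProduct,
      Pi.single_apply, Matrix.transpose_apply, Matrix.diagonal_apply, mul_comm]
    split_ifs with h
    · rw [h]
    · rfl
  have hgkey : ∀ j, j ≠ i0 → 0 < g j - g i0 := by
    intro j hj
    have hdj : 0 < d j - d i0 := by linarith [hd j hj]
    have h1 := hρ j hj
    rw [gt_iff_lt, div_lt_iff₀ hdj] at h1
    have hA : (xhat i0 - xhat j) ⬝ᵥ (xhat i0 - x)
        = xhat i0 ⬝ᵥ xhat i0 - xhat i0 ⬝ᵥ x - xhat j ⬝ᵥ xhat i0 + xhat j ⬝ᵥ x := by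
      simp [sub_dotProduct, dotProduct_sub]
      ring
    rw [hA] at h1
    rw [hg j, hg i0]
    simp only [hj, if_false, if_true, ite_true, ite_false, if_pos rfl]
    linarith
  have hsum0 : ∑ j, v j = 0 := by
    rw [hvdef]
    simp [Finset.sum_sub_distrib, hβ1, hedef, Finset.sum_pi_single]
  have hlin : 0 ≤ g ⬝ᵥ v := by
    have heq : g ⬝ᵥ v = ∑ j, (g j - g i0) * v j := by
      simp only [sub_mul, Finset.sum_sub_distrib, ← Finset.mul_sum, hsum0, mul_zero, sub_zero]
      rfl
    rw [heq]
    apply Finset.sum_nonneg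
    intro j _
    by_cases hj : j = i0
    · rw [hj]; simp
    · apply mul_nonneg (le_of_lt (hgkey j hj))
      have : v j = β j := by simp [hvdef, hedef, Pi.single_apply, hj]
      rw [this]; exact hβ0 j
  have : 0 < wssrObj P n xhat x d ξ ρ β - wssrObj P n xhat x d ξ ρ e := by
    rw [expand]
    linarith
  rw [hedef] at this
  linarith
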